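/- Let f : X → X be a continuous map on a metric space (X,d), let 0 < ε ≤ 1, and let K, L be nonempty compact subsets of X. If (K,L) is a D2 ε-pair for the hyperextension f̄ and the Hausdorff metric d_H, then there exists 0 < ε' ≤ ε such that at least one of the pairs (K, K∪L) or (K∪L, L) is a D2 ε'-pair for f̄ and d_H. -/

import Mathlib

open Filter Metric TopologicalSpace

/-- The hyperextension of a continuous map `f`, acting on the space `𝒦(X)` of nonempty
compact subsets of `X` (endowed with the Hausdorff metric) by `K ↦ f(K)`. -/
noncomputable def hyperext {X : Type*} [MetricSpace X] (f : X → X) (hf : Continuous f) :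
    NonemptyCompacts X → NonemptyCompacts X :=
  fun K => ⟨⟨f '' K, K.isCompact.image hf⟩, K.nonempty.image f⟩

/-- The singleton `{x}` as a nonempty compact set. -/
noncomputable def singNC {X : Type*} [MetricSpace X] (x : X) : NonemptyCompacts X :=
  ⟨⟨{x}, isCompact_singleton⟩, Set.singleton_nonempty x⟩

/-- Lower density of a set of positive integers. -/
noncomputable def lowerDensity (A : Set ℕ) : ℝ :=
  liminf (fun n : ℕ => (Nat.card ↥(A ∩ Set.Icc 1 n) : ℝ) / (n : ℝ)) atTop

/-- Upper density of a set of positive integers. -/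
noncomputable def upperDensity (A : Set ℕ) : ℝ :=
  limsup (fun n : ℕ => (Nat.card ↥(A ∩ Set.Icc 1 n) : ℝ) / (n : ℝ)) atTop

/-- The lower distributional function Φ_{(y,z)}(δ) generated by `g` for the pair `(y,z)`. -/
noncomputable def lowerDistFn {Y : Type*} [MetricSpace Y] (g : Y → Y) (y z : Y) (δ : ℝ) : ℝ :=
  lowerDensity {j : ℕ | dist (g^[j] y) (g^[j] z) < δ}

/-- The upper distributional function Φ*_{(y,z)}(δ) generated by `g` for the pair `(y,z)`. -/
noncomputable def upperDistFn {Y : Type*} [MetricSpace Y] (g : Y → Y) (y z : Y) (δ : ℝ) : ℝ :=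
  upperDensity {j : ℕ | dist (g^[j] y) (g^[j] z) < δ}

/-- `(y,z)` is a distributional ε-pair of type 2 (D2 ε-pair) for `g`, `0 < ε ≤ 1`:
`Φ_{(y,z)}(ε) ≤ 1 - ε` and `Φ*_{(y,z)}(δ) = 1` for all `δ > 0`. -/
def IsD2Pair {Y : Type*} [MetricSpace Y] (g : Y → Y) (ε : ℝ) (y z : Y) : Prop :=
  lowerDistFn g y z ε ≤ 1 - ε ∧ ∀ δ : ℝ, 0 < δ → upperDistFn g y z δ = 1

namespace D2Aux

noncomputable def cnt (A : Set ℕ) (n : ℕ) : ℝ :=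
  (Nat.card ↥(A ∩ Set.Icc 1 n) : ℝ) / (n : ℝ)

lemma cnt_eq (A : Set ℕ) (n : ℕ) :
    cnt A n = ((A ∩ Set.Icc 1 n).ncard : ℝ) / (n : ℝ) := rfl

lemma finite_inter (A : Set ℕ) (n : ℕ) : (A ∩ Set.Icc 1 n).Finite :=
  (Set.finite_Icc 1 n).inter_of_right _

lemma ncard_Icc (n : ℕ) : (Set.Icc 1 n).ncard = n := by
  rw [← Finset.coe_Icc, Set.ncard_coe_finset, Nat.card_Icc]; omega

lemma cnt_nonneg (A : Set ℕ) (n : ℕ) : 0 ≤ cnt A n := by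
  rw [cnt_eq]; positivity

lemma cnt_le_one (A : Set ℕ) (n : ℕ) : cnt A n ≤ 1 := by
  rcases Nat.eq_zero_or_pos n with rfl | hn
  · simp [cnt_eq]
  · rw [cnt_eq, div_le_one (by exact_mod_cast hn)]
    exact_mod_cast (Set.ncard_le_ncard (Set.inter_subset_right) (Set.finite_Icc 1 n)).trans
      (ncard_Icc n).le

lemma cnt_mono {A B : Set ℕ} (h : A ⊆ B) (n : ℕ) : cnt A n ≤ cnt B n := by
  rcases Nat.eq_zero_or_pos n with rfl | hn
  · simp [cnt_eq]
  · rw [cnt_eq, cnt_eq, div_le_div_iff_of_pos_right (by exact_mod_cast hn)]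
    exact_mod_cast Set.ncard_le_ncard (Set.inter_subset_inter_left _ h) (finite_inter B n)

lemma bdd_below (A : Set ℕ) : IsBoundedUnder (· ≥ ·) atTop (cnt A) :=
  isBoundedUnder_of ⟨0, fun n => cnt_nonneg A n⟩

lemma bdd_above (A : Set ℕ) : IsBoundedUnder (· ≤ ·) atTop (cnt A) :=
  isBoundedUnder_of ⟨1, fun n => cnt_le_one A n⟩

lemma cobdd_le (A : Set ℕ) : IsCoboundedUnder (· ≤ ·) atTop (cnt A) :=
  (bdd_below A).isCoboundedUnder_le

lemma cobdd_ge (A : Set ℕ) : IsCoboundedUnder (· ≥ ·) atTop (cnt A) :=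
  (bdd_above A).isCoboundedUnder_ge

lemma upperDensity_eq (A : Set ℕ) : upperDensity A = limsup (cnt A) atTop := rfl
lemma lowerDensity_eq (A : Set ℕ) : lowerDensity A = liminf (cnt A) atTop := rfl

lemma upperDensity_le_one (A : Set ℕ) : upperDensity A ≤ 1 :=
  limsup_le_of_le (cobdd_le A) (Eventually.of_forall (cnt_le_one A))

lemma upperDensity_mono {A B : Set ℕ} (h : A ⊆ B) : upperDensity A ≤ upperDensity B :=
  limsup_le_limsup (Eventually.of_forall (cnt_mono h)) (cobdd_le A) (bdd_above B)

lemma lowerDensity_mono {A B : Set ℕ} (h : A ⊆ B) : lowerDensity A ≤ lowerDensity B :=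
  liminf_le_liminf (Eventually.of_forall (cnt_mono h)) (bdd_below A) (cobdd_ge B)

lemma cnt_inter (A B : Set ℕ) (n : ℕ) (hn : 1 ≤ n) :
    cnt A n + cnt B n - 1 ≤ cnt (A ∩ B) n := by
  have hnR : (0 : ℝ) < n := by exact_mod_cast hn
  rw [cnt_eq, cnt_eq, cnt_eq, ← add_div, sub_le_iff_le_add,
    div_add' _ _ _ hnR.ne', div_le_div_iff_of_pos_right hnR]
  have key : ((A ∩ Set.Icc 1 n) ∩ (B ∩ Set.Icc 1 n)).ncard
      + ((A ∩ Set.Icc 1 n) ∪ (B ∩ Set.Icc 1 n)).ncard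
      = (A ∩ Set.Icc 1 n).ncard + (B ∩ Set.Icc 1 n).ncard :=
    Set.ncard_inter_add_ncard_union _ _ (finite_inter A n) (finite_inter B n)
  have hset : (A ∩ Set.Icc 1 n) ∩ (B ∩ Set.Icc 1 n) = (A ∩ B) ∩ Set.Icc 1 n := by
    ext x; simp; tauto
  have hU : (((A ∩ Set.Icc 1 n) ∪ (B ∩ Set.Icc 1 n)).ncard : ℝ) ≤ n := by
    have := Set.ncard_le_ncard
      (Set.union_subset Set.inter_subset_right Set.inter_subset_right :
        (A ∩ Set.Icc 1 n) ∪ (B ∩ Set.Icc 1 n) ⊆ Set.Icc 1 n) (Set.finite_Icc 1 n)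
    rw [ncard_Icc] at this
    exact_mod_cast this
  rw [hset] at key
  have := congrArg (fun k : ℕ => (k : ℝ)) key
  push_cast at this
  linarith


variable {X : Type*} [MetricSpace X]

lemma hyperext_iter_coe (f : X → X) (hf : Continuous f)
    (A : NonemptyCompacts X) (j : ℕ) :
    (((hyperext f hf)^[j] A : NonemptyCompacts X) : Set X) = f^[j] '' A := by
  induction j with
  | zero => simp
  | succ j ih =>
    have h1 : ((hyperext f hf) ((hyperext f hf)^[j] A) : Set X)
        = f '' ((hyperext f hf)^[j] A : Set X) := rfl
    rw [Function.iterate_succ_apply', h1, ih, Function.iterate_succ' f j, Set.image_comp]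

lemma hEdist_left (s t : Set X) :
    EMetric.hausdorffEdist s (s ∪ t) ≤ EMetric.hausdorffEdist s t := by
  apply EMetric.hausdorffEdist_le_of_infEdist
  · intro x hx
    calc EMetric.infEdist x (s ∪ t) ≤ EMetric.infEdist x s :=
          EMetric.infEdist_anti Set.subset_union_left
      _ = 0 := EMetric.infEdist_zero_of_mem hx
      _ ≤ _ := zero_le
  · rintro y (hy | hy)
    · rw [EMetric.infEdist_zero_of_mem hy]; exact zero_le
    · unfold EMetric.hausdorffEdist
      rw [EMetric.hausdorffEdist_comm]
      exact EMetric.infEdist_le_hausdorffEdist_of_mem hy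

lemma hEdist_right (s t : Set X) :
    EMetric.hausdorffEdist (s ∪ t) t ≤ EMetric.hausdorffEdist s t := by
  unfold EMetric.hausdorffEdist
  rw [EMetric.hausdorffEdist_comm, Set.union_comm, EMetric.hausdorffEdist_comm (s := s)]
  exact hEdist_left t s

lemma fin_hEdist (S T : NonemptyCompacts X) :
    EMetric.hausdorffEdist (S : Set X) (T : Set X) ≠ ⊤ :=
  Metric.hausdorffEdist_ne_top_of_nonempty_of_bounded S.nonempty T.nonempty
    S.isCompact.isBounded T.isCompact.isBounded

lemma dist_le_left (S T U : NonemptyCompacts X)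
    (hU : (U : Set X) = (S : Set X) ∪ (T : Set X)) : dist S U ≤ dist S T := by
  rw [NonemptyCompacts.dist_eq, NonemptyCompacts.dist_eq]
  exact ENNReal.toReal_mono (fin_hEdist S T) (hU ▸ hEdist_left (S : Set X) (T : Set X))

lemma dist_le_right (S T U : NonemptyCompacts X)
    (hU : (U : Set X) = (S : Set X) ∪ (T : Set X)) : dist U T ≤ dist S T := by
  rw [NonemptyCompacts.dist_eq, NonemptyCompacts.dist_eq]
  exact ENNReal.toReal_mono (fin_hEdist S T) (hU ▸ hEdist_right (S : Set X) (T : Set X))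

end D2Aux

/-- If `(K,L)` is a D2 ε-pair for the hyperextension `f̄` and the Hausdorff metric, with
`0 < ε ≤ 1`, then there exists `0 < ε' ≤ ε` such that at least one of `(K, K ∪ L)` or
`(K ∪ L, L)` is a D2 ε'-pair for `f̄` and `d_H`. -/
theorem d2Pair_union_of_d2Pair {X : Type*} [MetricSpace X]
    (f : X → X) (hf : Continuous f) (ε : ℝ) (hε0 : 0 < ε) (hε1 : ε ≤ 1)
    (K L KL : NonemptyCompacts X) (hKL : (KL : Set X) = (K : Set X) ∪ (L : Set X))
    (h : IsD2Pair (hyperext f hf) ε K L) :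
    ∃ ε' : ℝ, 0 < ε' ∧ ε' ≤ ε ∧
      (IsD2Pair (hyperext f hf) ε' K KL ∨ IsD2Pair (hyperext f hf) ε' KL L) := by
    classical
  set g := hyperext f hf with hg
  have hiter := D2Aux.hyperext_iter_coe f hf
  have hU : ∀ j : ℕ, ((g^[j] KL : NonemptyCompacts X) : Set X)
      = ((g^[j] K : NonemptyCompacts X) : Set X) ∪ ((g^[j] L : NonemptyCompacts X) : Set X) := by
    intro j
    rw [hg, hiter, hiter, hiter, hKL, Set.image_union]
  have ha : ∀ j : ℕ, dist (g^[j] K) (g^[j] KL) ≤ dist (g^[j] K) (g^[j] L) :=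
    fun j => D2Aux.dist_le_left _ _ _ (hU j)
  have hb : ∀ j : ℕ, dist (g^[j] KL) (g^[j] L) ≤ dist (g^[j] K) (g^[j] L) :=
    fun j => D2Aux.dist_le_right _ _ _ (hU j)
  have hupK : ∀ δ : ℝ, 0 < δ → upperDistFn g K KL δ = 1 := by
    intro δ hδ
    refine le_antisymm (D2Aux.upperDensity_le_one _) ?_
    rw [← h.2 δ hδ]
    exact D2Aux.upperDensity_mono (fun j hj => lt_of_le_of_lt (ha j) hj)
  have hupL : ∀ δ : ℝ, 0 < δ → upperDistFn g KL L δ = 1 := by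
    intro δ hδ
    refine le_antisymm (D2Aux.upperDensity_le_one _) ?_
    rw [← h.2 δ hδ]
    exact D2Aux.upperDensity_mono (fun j hj => lt_of_le_of_lt (hb j) hj)
  refine ⟨ε / 2, by linarith, by linarith, ?_⟩
  by_contra hcon
  push_neg at hcon
  obtain ⟨h1, h2⟩ := hcon
  have l1 : 1 - ε / 2 < lowerDistFn g K KL (ε / 2) := by
    by_contra hle; push_neg at hle; exact h1 ⟨hle, hupK⟩
  have l2 : 1 - ε / 2 < lowerDistFn g KL L (ε / 2) := by
    by_contra hle; push_neg at hle; exact h2 ⟨hle, hupL⟩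
  set A := {j : ℕ | dist (g^[j] K) (g^[j] KL) < ε / 2} with hA
  set B := {j : ℕ | dist (g^[j] KL) (g^[j] L) < ε / 2} with hB
  have hsub : A ∩ B ⊆ {j : ℕ | dist (g^[j] K) (g^[j] L) < ε} := by
    rintro j ⟨hja, hjb⟩
    have htri := dist_triangle (g^[j] K) (g^[j] KL) (g^[j] L)
    simp only [hA, hB, Set.mem_setOf_eq] at hja hjb ⊢
    linarith
  obtain ⟨a, ha1, ha2⟩ := exists_between l1
  obtain ⟨b, hb1, hb2⟩ := exists_between l2
  have hevA : ∀ᶠ n in atTop, a < D2Aux.cnt A n :=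
    eventually_lt_of_lt_liminf ha2 (D2Aux.bdd_below A)
  have hevB : ∀ᶠ n in atTop, b < D2Aux.cnt B n :=
    eventually_lt_of_lt_liminf hb2 (D2Aux.bdd_below B)
  have hev : ∀ᶠ n in atTop, a + b - 1 ≤ D2Aux.cnt (A ∩ B) n := by
    filter_upwards [hevA, hevB, eventually_ge_atTop 1] with n hn1 hn2 hn3
    have := D2Aux.cnt_inter A B n hn3
    linarith
  have hlb : a + b - 1 ≤ lowerDensity (A ∩ B) :=
    le_liminf_of_le (D2Aux.cobdd_ge _) hev
  have hmono : lowerDensity (A ∩ B) ≤ lowerDistFn g K L ε := D2Aux.lowerDensity_mono hsub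
  have hfin := h.1
  linarith
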